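/- Fix K, M ∈ ℕ and d : Fin K → ℕ; for each k let F̄ₖ ∈ ℂ^{M×d_k}, Ḡₖ ∈ ℂ^{M×d_k}, and for each ordered pair (l,k) with l ≠ k let H̄_{lk} ∈ ℂ^{d_k×d_l}. Define Σ = Σ_{l≠k} (F̄ₖF̄ₖᴴ) ⊙ (ḠₗḠₗᴴ)* and s ∈ ℂ^M with s_m = Σ_{l≠k} (F̄ₖ H̄_{lk} Ḡₗᴴ)_{mm}. Then s lies in the column space of Σ; that is, there exists x ∈ ℂ^M with Σ.mulVec x = s. -/

import Mathlib

open Matrix Finset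

private lemma swap4 {α β γ δ : Type*} [Fintype α] [Fintype β] [Fintype γ] [Fintype δ]
    (f : α → β → γ → δ → ℂ) :
    ∑ a, ∑ b, ∑ c, ∑ d, f a b c d = ∑ c, ∑ d, ∑ a, ∑ b, f a b c d := by
  calc ∑ a, ∑ b, ∑ c, ∑ d, f a b c d
      = ∑ a, ∑ c, ∑ b, ∑ d, f a b c d :=
        Finset.sum_congr rfl fun a _ => Finset.sum_comm
    _ = ∑ a, ∑ c, ∑ d, ∑ b, f a b c d :=
        Finset.sum_congr rfl fun a _ => Finset.sum_congr rfl fun c _ => Finset.sum_comm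
    _ = ∑ c, ∑ a, ∑ d, ∑ b, f a b c d := Finset.sum_comm
    _ = ∑ c, ∑ d, ∑ a, ∑ b, f a b c d :=
        Finset.sum_congr rfl fun c _ => Finset.sum_comm

private lemma swap3 {α β γ : Type*} [Fintype α] [Fintype β] [Fintype γ]
    (f : α → β → γ → ℂ) :
    ∑ a, ∑ b, ∑ c, f a b c = ∑ b, ∑ c, ∑ a, f a b c := by
  calc ∑ a, ∑ b, ∑ c, f a b c = ∑ b, ∑ a, ∑ c, f a b c := Finset.sum_comm
    _ = ∑ b, ∑ c, ∑ a, f a b c := Finset.sum_congr rfl fun b _ => Finset.sum_comm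

private lemma quad {M dk dl : ℕ} (Fk : Matrix (Fin M) (Fin dk) ℂ) (Gl : Matrix (Fin M) (Fin dl) ℂ)
    (y : Fin M → ℂ) :
    star y ⬝ᵥ ((Matrix.hadamard (Fk * Fkᴴ) ((Gl * Glᴴ).map (starRingEnd ℂ))) *ᵥ y)
    = ∑ i, ∑ j, ((Complex.normSq (∑ m, (starRingEnd ℂ) (y m) * Fk m i * (starRingEnd ℂ) (Gl m j)) : ℝ) : ℂ) := by
  have key : ∀ (i : Fin dk) (j : Fin dl),
      ((Complex.normSq (∑ m, (starRingEnd ℂ) (y m) * Fk m i * (starRingEnd ℂ) (Gl m j)) : ℝ) : ℂ)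
      = ∑ m, ∑ n, ((starRingEnd ℂ) (y m) * Fk m i * (starRingEnd ℂ) (Gl m j)) *
          (y n * (starRingEnd ℂ) (Fk n i) * Gl n j) := by
    intro i j
    rw [← Complex.mul_conj, map_sum, Finset.sum_mul_sum]
    refine Finset.sum_congr rfl fun m _ => Finset.sum_congr rfl fun n _ => ?_
    simp only [_root_.map_mul, Complex.conj_conj]
  have hA : ∀ m n : Fin M,
      (Matrix.hadamard (Fk * Fkᴴ) ((Gl * Glᴴ).map (starRingEnd ℂ))) m n
      = ∑ i, ∑ j, Fk m i * (starRingEnd ℂ) (Fk n i) * (starRingEnd ℂ) (Gl m j) * Gl n j := by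
    intro m n
    simp only [Matrix.hadamard_apply, Matrix.mul_apply, conjTranspose_apply, Matrix.map_apply,
      map_sum, _root_.map_mul, Complex.conj_conj]
    rw [Finset.sum_mul_sum]
    refine Finset.sum_congr rfl fun i _ => Finset.sum_congr rfl fun j _ => ?_
    simp only [RCLike.star_def, Complex.conj_conj]
    ring
  calc star y ⬝ᵥ ((Matrix.hadamard (Fk * Fkᴴ) ((Gl * Glᴴ).map (starRingEnd ℂ))) *ᵥ y)
      = ∑ m, ∑ n, ∑ i, ∑ j, ((starRingEnd ℂ) (y m) * Fk m i * (starRingEnd ℂ) (Gl m j)) *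
          (y n * (starRingEnd ℂ) (Fk n i) * Gl n j) := by
        simp only [dotProduct, mulVec, Pi.star_apply, Finset.mul_sum, RCLike.star_def]
        refine Finset.sum_congr rfl fun m _ => Finset.sum_congr rfl fun n _ => ?_
        rw [hA m n]
        simp only [Finset.sum_mul, Finset.mul_sum]
        refine Finset.sum_congr rfl fun i _ => Finset.sum_congr rfl fun j _ => ?_
        ring
    _ = ∑ i, ∑ j, ∑ m, ∑ n, ((starRingEnd ℂ) (y m) * Fk m i * (starRingEnd ℂ) (Gl m j)) *
          (y n * (starRingEnd ℂ) (Fk n i) * Gl n j) := swap4 _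
    _ = _ := Finset.sum_congr rfl fun i _ => Finset.sum_congr rfl fun j _ => (key i j).symm

private lemma lin {M dk dl : ℕ} (Fk : Matrix (Fin M) (Fin dk) ℂ) (Gl : Matrix (Fin M) (Fin dl) ℂ)
    (Hlk : Matrix (Fin dk) (Fin dl) ℂ) (y : Fin M → ℂ) :
    ∑ m, (starRingEnd ℂ) (y m) * (Fk * Hlk * Glᴴ) m m
    = ∑ i, ∑ j, Hlk i j * (∑ m, (starRingEnd ℂ) (y m) * Fk m i * (starRingEnd ℂ) (Gl m j)) := by
  calc ∑ m, (starRingEnd ℂ) (y m) * (Fk * Hlk * Glᴴ) m m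
      = ∑ m, ∑ i, ∑ j, Hlk i j * ((starRingEnd ℂ) (y m) * Fk m i * (starRingEnd ℂ) (Gl m j)) := by
        refine Finset.sum_congr rfl fun m _ => ?_
        rw [show (Fk * Hlk * Glᴴ) m m = ∑ i, ∑ j, Fk m i * Hlk i j * (starRingEnd ℂ) (Gl m j) by
          simp only [Matrix.mul_apply, conjTranspose_apply, Complex.star_def, Finset.sum_mul]
          exact Finset.sum_comm]
        rw [Finset.mul_sum]
        refine Finset.sum_congr rfl fun i _ => ?_
        rw [Finset.mul_sum]
        refine Finset.sum_congr rfl fun j _ => ?_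
        ring
    _ = ∑ i, ∑ j, ∑ m, Hlk i j * ((starRingEnd ℂ) (y m) * Fk m i * (starRingEnd ℂ) (Gl m j)) :=
        swap3 _
    _ = _ := by
        refine Finset.sum_congr rfl fun i _ => Finset.sum_congr rfl fun j _ => ?_
        rw [Finset.mul_sum]

private lemma range_eq_orthogonal {𝕜 E : Type*} [RCLike 𝕜] [NormedAddCommGroup E]
    [InnerProductSpace 𝕜 E] [FiniteDimensional 𝕜 E] (T : E →ₗ[𝕜] E)
    (hT : LinearMap.adjoint T = T) :
    LinearMap.range T = (LinearMap.ker T)ᗮ := by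
  conv_rhs => rw [← hT]
  rw [← Submodule.orthogonal_orthogonal (LinearMap.range T)]
  congr 1
  ext x
  rw [Submodule.mem_orthogonal, LinearMap.mem_ker]
  constructor
  · intro hx
    rw [← @inner_self_eq_zero 𝕜, LinearMap.adjoint_inner_right]
    exact hx _ ⟨_, rfl⟩
  · rintro hx u ⟨w, rfl⟩
    rw [← LinearMap.adjoint_inner_right, hx, inner_zero_right]

private lemma qsum {M : ℕ} {ι : Type*} (t : Finset ι) (A : ι → Matrix (Fin M) (Fin M) ℂ)
    (y : Fin M → ℂ) :
    star y ⬝ᵥ ((∑ i ∈ t, A i) *ᵥ y) = ∑ i ∈ t, star y ⬝ᵥ (A i *ᵥ y) :=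
  map_sum (AddMonoidHom.mk' (fun B : Matrix (Fin M) (Fin M) ℂ => star y ⬝ᵥ (B *ᵥ y))
    (fun B C => by rw [add_mulVec, dotProduct_add])) A t

/-- The key computational fact: if `Sig *ᵥ y = 0` then `⟪y, s⟫ = 0`. -/
private lemma key_orth (K M : ℕ) (d : Fin K → ℕ)
    (F : (k : Fin K) → Matrix (Fin M) (Fin (d k)) ℂ)
    (G : (k : Fin K) → Matrix (Fin M) (Fin (d k)) ℂ)
    (H : (l k : Fin K) → Matrix (Fin (d k)) (Fin (d l)) ℂ)
    (Sig : Matrix (Fin M) (Fin M) ℂ)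
    (hSig : Sig = ∑ l, ∑ k, if l ≠ k then
      Matrix.hadamard (F k * (F k)ᴴ) ((G l * (G l)ᴴ).map (starRingEnd ℂ)) else 0)
    (s : Fin M → ℂ)
    (hs : ∀ m, s m = ∑ l, ∑ k, if l ≠ k then (F k * H l k * (G l)ᴴ) m m else 0)
    (y : Fin M → ℂ) (hy : Sig *ᵥ y = 0) :
    ∑ m, (starRingEnd ℂ) (y m) * s m = 0 := by
  classical
  have hq : star y ⬝ᵥ (Sig *ᵥ y) = 0 := by rw [hy, dotProduct_zero]
  have hq2 : ∑ l, ∑ k, (if l ≠ k then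
      (∑ i, ∑ j, ((Complex.normSq (∑ m, (starRingEnd ℂ) (y m) * F k m i *
        (starRingEnd ℂ) (G l m j)) : ℝ) : ℂ)) else 0) = 0 := by
    have e : star y ⬝ᵥ (Sig *ᵥ y) = ∑ l, ∑ k, (if l ≠ k then
        (∑ i, ∑ j, ((Complex.normSq (∑ m, (starRingEnd ℂ) (y m) * F k m i *
          (starRingEnd ℂ) (G l m j)) : ℝ) : ℂ)) else 0) := by
      rw [hSig, qsum]
      refine Finset.sum_congr rfl fun l _ => ?_
      rw [qsum]
      refine Finset.sum_congr rfl fun k _ => ?_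
      by_cases h : l ≠ k
      · rw [if_pos h, if_pos h, quad]
      · rw [if_neg h, if_neg h, zero_mulVec, dotProduct_zero]
    rw [← e, hq]
  have hq3 : ∑ l, ∑ k, (if l ≠ k then
      (∑ i, ∑ j, Complex.normSq (∑ m, (starRingEnd ℂ) (y m) * F k m i *
        (starRingEnd ℂ) (G l m j))) else 0) = (0 : ℝ) := by
    have e2 : ((∑ l, ∑ k, (if l ≠ k then
        (∑ i, ∑ j, Complex.normSq (∑ m, (starRingEnd ℂ) (y m) * F k m i *
          (starRingEnd ℂ) (G l m j))) else 0) : ℝ) : ℂ) = 0 := by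
      rw [← hq2]
      push_cast
      refine Finset.sum_congr rfl fun l _ => Finset.sum_congr rfl fun k _ => ?_
      split <;> push_cast <;> simp
    exact_mod_cast e2
  have hnn : ∀ l ∈ (Finset.univ : Finset (Fin K)), ∀ k ∈ (Finset.univ : Finset (Fin K)),
      (0:ℝ) ≤ if l ≠ k then (∑ i, ∑ j, Complex.normSq (∑ m, (starRingEnd ℂ) (y m) * F k m i *
        (starRingEnd ℂ) (G l m j))) else 0 := by
    intro l _ k _
    split
    · exact Finset.sum_nonneg fun i _ => Finset.sum_nonneg fun j _ => Complex.normSq_nonneg _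
    · exact le_refl 0
  have hvz : ∀ l k : Fin K, l ≠ k → ∀ (i : Fin (d k)) (j : Fin (d l)),
      (∑ m, (starRingEnd ℂ) (y m) * F k m i * (starRingEnd ℂ) (G l m j)) = 0 := by
    intro l k hlk i j
    have h1 := (Finset.sum_eq_zero_iff_of_nonneg
      (fun l hl => Finset.sum_nonneg (hnn l hl))).mp hq3 l (Finset.mem_univ l)
    have h2 := (Finset.sum_eq_zero_iff_of_nonneg (hnn l (Finset.mem_univ l))).mp h1 k
      (Finset.mem_univ k)
    rw [if_pos hlk] at h2
    have h3 := (Finset.sum_eq_zero_iff_of_nonneg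
      (fun i _ => Finset.sum_nonneg fun j _ => Complex.normSq_nonneg _)).mp h2 i
      (Finset.mem_univ i)
    have h4 := (Finset.sum_eq_zero_iff_of_nonneg
      (fun j _ => Complex.normSq_nonneg _)).mp h3 j (Finset.mem_univ j)
    exact Complex.normSq_eq_zero.mp h4
  calc ∑ m, (starRingEnd ℂ) (y m) * s m
      = ∑ m, ∑ l, ∑ k, (if l ≠ k then
          (starRingEnd ℂ) (y m) * (F k * H l k * (G l)ᴴ) m m else 0) := by
        refine Finset.sum_congr rfl fun m _ => ?_
        rw [hs m, Finset.mul_sum]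
        refine Finset.sum_congr rfl fun l _ => ?_
        rw [Finset.mul_sum]
        refine Finset.sum_congr rfl fun k _ => ?_
        rw [mul_ite, mul_zero]
    _ = ∑ l, ∑ k, ∑ m, (if l ≠ k then
          (starRingEnd ℂ) (y m) * (F k * H l k * (G l)ᴴ) m m else 0) := swap3 _
    _ = 0 := by
        refine Finset.sum_eq_zero fun l _ => Finset.sum_eq_zero fun k _ => ?_
        by_cases h : l ≠ k
        · simp only [if_pos h]
          rw [lin]
          refine Finset.sum_eq_zero fun i _ => Finset.sum_eq_zero fun j _ => ?_
          rw [hvz l k h i j, mul_zero]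
        · simp only [if_neg h, Finset.sum_const_zero]

/-- The vector `s`, with `s m = Σ_{l≠k} (F̄ₖ H̄_{lk} Ḡₗᴴ) m m`, lies in the column
space of `Σ = Σ_{l≠k} (F̄ₖF̄ₖᴴ) ⊙ (ḠₗḠₗᴴ)*`. -/
theorem s_mem_colSpace (K M : ℕ) (d : Fin K → ℕ)
    (F : (k : Fin K) → Matrix (Fin M) (Fin (d k)) ℂ)
    (G : (k : Fin K) → Matrix (Fin M) (Fin (d k)) ℂ)
    (H : (l k : Fin K) → Matrix (Fin (d k)) (Fin (d l)) ℂ)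
    (Sig : Matrix (Fin M) (Fin M) ℂ)
    (hSig : Sig = ∑ l, ∑ k, if l ≠ k then
      Matrix.hadamard (F k * (F k)ᴴ) ((G l * (G l)ᴴ).map (starRingEnd ℂ)) else 0)
    (s : Fin M → ℂ)
    (hs : ∀ m, s m = ∑ l, ∑ k, if l ≠ k then (F k * H l k * (G l)ᴴ) m m else 0) :
    ∃ x : Fin M → ℂ, Sig.mulVec x = s := by
  classical
  -- Sig is Hermitian
  have hherm : Sigᴴ = Sig := by
    rw [hSig]
    rw [conjTranspose_sum]
    refine Finset.sum_congr rfl fun l _ => ?_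
    rw [conjTranspose_sum]
    refine Finset.sum_congr rfl fun k _ => ?_
    by_cases h : l ≠ k
    · rw [if_pos h]
      have hF := Matrix.isHermitian_mul_conjTranspose_self (F k)
      have hG := Matrix.isHermitian_mul_conjTranspose_self (G l)
      ext m n
      simp only [conjTranspose_apply, Matrix.hadamard_apply, Matrix.map_apply, star_mul',
        Complex.star_def, Complex.conj_conj]
      have e1 : (starRingEnd ℂ) ((F k * (F k)ᴴ) n m) = (F k * (F k)ᴴ) m n := hF.apply m n
      have e2 : (G l * (G l)ᴴ) n m = (starRingEnd ℂ) ((G l * (G l)ᴴ) m n) := (hG.apply n m).symm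
      rw [e1, e2]
    · rw [if_neg h]
      exact conjTranspose_zero
  set T := Matrix.toEuclideanLin Sig with hT
  have hadj : LinearMap.adjoint T = T := by
    rw [hT, ← Matrix.toEuclideanLin_conjTranspose_eq_adjoint, hherm]
  have hrange := range_eq_orthogonal T hadj
  have hmem : (WithLp.equiv 2 (Fin M → ℂ)).symm s ∈ (LinearMap.ker T)ᗮ := by
    rw [Submodule.mem_orthogonal]
    intro u hu
    rw [LinearMap.mem_ker] at hu
    have hy0 : Sig *ᵥ (WithLp.equiv 2 (Fin M → ℂ) u) = 0 := by
      have h2 := congrArg (WithLp.equiv 2 (Fin M → ℂ)) hu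
      rwa [WithLp.equiv_apply, WithLp.equiv_apply, hT, Matrix.ofLp_toEuclideanLin_apply, WithLp.ofLp_zero] at h2
    have hinner : (inner ℂ u ((WithLp.equiv 2 (Fin M → ℂ)).symm s) : ℂ)
        = ∑ m, (starRingEnd ℂ) ((WithLp.equiv 2 (Fin M → ℂ) u) m) * s m := by
      simp [PiLp.inner_apply, RCLike.inner_apply, mul_comm]
    rw [hinner]
    exact key_orth K M d F G H Sig hSig s hs _ hy0
  rw [← hrange] at hmem
  obtain ⟨x, hx⟩ := hmem
  refine ⟨WithLp.equiv 2 (Fin M → ℂ) x, ?_⟩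
  have h3 := congrArg (WithLp.equiv 2 (Fin M → ℂ)) hx
  rwa [Equiv.apply_symm_apply, WithLp.equiv_apply, hT, Matrix.ofLp_toEuclideanLin_apply] at h3
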